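/- Let k ≥ 2, P = ∏_{p≤k} p, U a positive multiple of P, M = (φ(P)/P)U. Suppose D is a set of positive integers such that for every k-element subset H of {m ≤ U : gcd(m,P)=1} and every even r ∈ [1,U] \ H, either some difference h_j − h_i (i < j, h_i, h_j ∈ H) lies in D, or |r − h_i| ∈ D for some h_i ∈ H. Then the number of elements of D in [1, U] is at least U·(4k + k(k−1)P/φ(P))^{−1}·(1 + o(1)) as U → ∞; in particular the lower density of D is at least (4k + k(k−1)P/φ(P))^{−1}. -/

import Mathlib

open Finset

open scoped Classical in
lemma count_aux (D : Set ℕ) (U : ℕ) (E W : Finset ℕ)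
    (hE : E ⊆ Finset.Icc 1 U) (hW : W ⊆ Finset.Icc 1 U) (hdisj : ∀ r ∈ E, r ∉ W)
    (hcov : ∀ r ∈ E, ∃ h ∈ W, ((r : ℤ) - (h : ℤ)).natAbs ∈ D) :
    E.card ≤ 2 * W.card * ((Finset.Icc 1 U).filter (fun d => d ∈ D)).card := by
  classical
  set F : ℕ → ℕ := fun r =>
    if h : ∃ hh ∈ W, ((r : ℤ) - (hh : ℤ)).natAbs ∈ D then
      ((r : ℤ) - (h.choose : ℤ)).natAbs else 0 with hF
  have key : ∀ r ∈ E, ∃ h ∈ W, F r = ((r : ℤ) - (h : ℤ)).natAbs ∧ F r ∈ D := by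
    intro r hr
    have h := hcov r hr
    refine ⟨h.choose, h.choose_spec.1, ?_, ?_⟩
    · simp only [hF]; rw [dif_pos h]
    · simp only [hF]; rw [dif_pos h]; exact h.choose_spec.2
  have maps : ∀ r ∈ E, F r ∈ (Finset.Icc 1 U).filter (fun d => d ∈ D) := by
    intro r hr
    obtain ⟨h, hhW, hFr, hFD⟩ := key r hr
    have hr' := Finset.mem_Icc.mp (hE hr)
    have hh' := Finset.mem_Icc.mp (hW hhW)
    have hne : r ≠ h := fun e => hdisj r hr (e ▸ hhW)
    refine Finset.mem_filter.mpr ⟨Finset.mem_Icc.mpr ⟨?_, ?_⟩, hFD⟩ <;> rw [hFr] <;> omega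
  refine Finset.card_le_mul_card_image_of_maps_to maps _ ?_
  intro d _
  have hsub : E.filter (fun r => F r = d) ⊆ W.biUnion (fun h => {h + d, h - d}) := by
    intro r hr
    obtain ⟨hrE, hFd⟩ := Finset.mem_filter.mp hr
    obtain ⟨h, hhW, hFr, _⟩ := key r hrE
    rw [hFr] at hFd
    refine Finset.mem_biUnion.mpr ⟨h, hhW, ?_⟩
    simp only [Finset.mem_insert, Finset.mem_singleton]
    omega
  calc (E.filter (fun r => F r = d)).card ≤ (W.biUnion (fun h => {h + d, h - d})).card :=
        Finset.card_le_card hsub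
    _ ≤ ∑ h ∈ W, ({h + d, h - d} : Finset ℕ).card := Finset.card_biUnion_le
    _ ≤ ∑ _h ∈ W, 2 := Finset.sum_le_sum (fun h _ => Finset.card_insert_le _ _)
    _ = 2 * W.card := by rw [Finset.sum_const, smul_eq_mul, mul_comm]

lemma coprime_count (P : ℕ) (hP2 : 2 ≤ P) (q : ℕ) :
    P.totient * q ≤ ((Finset.Icc 1 (P * q)).filter (fun m => Nat.gcd m P = 1)).card := by
  classical
  induction q with
  | zero => simp
  | succ q ih =>
    have hstep : ((Finset.Ico (P * q) (P * q + P)).filter (fun m => Nat.gcd m P = 1)).card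
        = P.totient := by
      rw [← Nat.filter_coprime_Ico_eq_totient P (P * q)]
      apply congrArg
      apply Finset.filter_congr
      intro x _
      simp [Nat.Coprime, Nat.gcd_comm]
    have hgcdPq : Nat.gcd (P * q) P ≠ 1 := by
      have hd : P ∣ Nat.gcd (P * q) P := Nat.dvd_gcd (Dvd.intro q rfl) dvd_rfl
      intro h; rw [h] at hd
      exact absurd (Nat.le_of_dvd one_pos hd) (by omega)
    set A := (Finset.Icc 1 (P * q)).filter (fun m => Nat.gcd m P = 1) with hAdef
    set B := (Finset.Ico (P * q) (P * q + P)).filter (fun m => Nat.gcd m P = 1) with hBdef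
    have hmul : P * (q + 1) = P * q + P := by ring
    have hsub : A ∪ B ⊆ (Finset.Icc 1 (P * (q + 1))).filter (fun m => Nat.gcd m P = 1) := by
      intro x hx
      simp only [hAdef, hBdef, Finset.mem_union, Finset.mem_filter, Finset.mem_Icc,
        Finset.mem_Ico] at hx ⊢
      rcases hx with ⟨⟨h1, h2⟩, h3⟩ | ⟨⟨h1, h2⟩, h3⟩
      · exact ⟨⟨h1, by omega⟩, h3⟩
      · have hxne : x ≠ P * q := fun e => hgcdPq (e ▸ h3)
        have hx0 : x ≠ 0 := by
          intro e; rw [e] at h3; simp [Nat.gcd_zero_left] at h3; omega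
        exact ⟨⟨by omega, by omega⟩, h3⟩
    have hdisj : Disjoint A B := by
      rw [Finset.disjoint_left]
      intro x hxA hxB
      simp only [hAdef, Finset.mem_filter, Finset.mem_Icc] at hxA
      simp only [hBdef, Finset.mem_filter, Finset.mem_Ico] at hxB
      have : x ≠ P * q := fun e => hgcdPq (e ▸ hxB.2)
      omega
    calc P.totient * (q + 1) = P.totient * q + P.totient := by ring
      _ ≤ A.card + B.card := by rw [hstep]; exact Nat.add_le_add_right ih _
      _ = (A ∪ B).card := (Finset.card_union_of_disjoint hdisj).symm
      _ ≤ _ := Finset.card_le_card hsub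

set_option maxHeartbeats 2000000 in
open scoped Classical in
theorem lower_density_bound (k : ℕ) (hk : 2 ≤ k)
    (P : ℕ) (hP : P = ∏ p ∈ Finset.filter Nat.Prime (Finset.range (k + 1)), p)
    (D : Set ℕ)
    (hcover : ∀ U : ℕ, 0 < U → P ∣ U →
      ∀ H : Finset ℕ,
        H ⊆ (Finset.Icc 1 U).filter (fun m => Nat.gcd m P = 1) → H.card = k →
      ∀ r ∈ Finset.Icc 1 U, 2 ∣ r → r ∉ H →
        (∃ a ∈ H, ∃ b ∈ H, a < b ∧ b - a ∈ D) ∨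
        (∃ h ∈ H, ((r : ℤ) - (h : ℤ)).natAbs ∈ D)) :
    Filter.atTop.liminf
        (fun U : ℕ => (((Finset.Icc 1 U).filter (fun d => d ∈ D)).card : ℝ) / U) ≥
      (4 * (k : ℝ) + (k : ℝ) * ((k : ℝ) - 1) * (P : ℝ) / (Nat.totient P : ℝ))⁻¹ := by
  classical
  set f : ℕ → ℕ := fun n => ((Finset.Icc 1 n).filter (fun d => d ∈ D)).card with hfdef
  -- basic facts about P
  have h2mem : 2 ∈ (Finset.range (k + 1)).filter Nat.Prime := by
    simp only [Finset.mem_filter, Finset.mem_range]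
    exact ⟨by omega, Nat.prime_two⟩
  have h2P : 2 ∣ P := hP ▸ Finset.dvd_prod_of_mem _ h2mem
  have hP0 : P ≠ 0 := by
    rw [hP]
    exact Finset.prod_ne_zero_iff.mpr
      (fun p hp => ((Finset.mem_filter.mp hp).2.pos).ne')
  have hP2 : 2 ≤ P := Nat.le_of_dvd (Nat.pos_of_ne_zero hP0) h2P
  have hφ : 0 < P.totient := Nat.totient_pos.mpr (by omega)
  have hmono : ∀ {a b : ℕ}, a ≤ b → f a ≤ f b := by
    intro a b hab
    exact Finset.card_le_card (Finset.filter_subset_filter _ (Finset.Icc_subset_Icc_right hab))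
  -- key dichotomy for multiples of P
  have key : ∀ U : ℕ, 0 < U → P ∣ U →
      U / 2 ≤ k + 2 * (k * f U) ∨
      P.totient * (U / P) ≤ (k - 1) + 2 * ((k - 1) * f U) := by
    intro U hU hPU
    set C := (Finset.Icc 1 U).filter (fun m => Nat.gcd m P = 1) with hC
    by_cases hex : ∃ H ⊆ C, H.card = k ∧ ¬ ∃ a ∈ H, ∃ b ∈ H, a < b ∧ b - a ∈ D
    · left
      obtain ⟨H, hHC, hHk, hfree⟩ := hex
      set Ev := ((Finset.Icc 1 U).filter (fun r => 2 ∣ r)) \ H with hEv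
      have hEvcard : U / 2 - k ≤ Ev.card := by
        have h1 : ((Finset.Icc 1 U).filter (fun r => 2 ∣ r)).card = U / 2 := by
          have : Finset.Icc 1 U = Finset.Ioc 0 U := by
            exact Finset.Icc_succ_left_eq_Ioc _ _
          rw [this, Nat.Ioc_filter_dvd_card_eq_div]
        have h2 := Finset.le_card_sdiff H ((Finset.Icc 1 U).filter (fun r => 2 ∣ r))
        rw [h1, hHk] at h2
        rw [hEv]
        omega
      have hcov : ∀ r ∈ Ev, ∃ h ∈ H, ((r : ℤ) - (h : ℤ)).natAbs ∈ D := by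
        intro r hr
        rw [hEv, Finset.mem_sdiff, Finset.mem_filter] at hr
        obtain ⟨⟨hrI, hrd⟩, hrH⟩ := hr
        rcases hcover U hU hPU H hHC hHk r hrI hrd hrH with h | h
        · exact absurd h hfree
        · exact h
      have hcount := count_aux D U Ev H
        (by rw [hEv]; exact (Finset.sdiff_subset).trans (Finset.filter_subset _ _))
        (hHC.trans (Finset.filter_subset _ _))
        (fun r hr => (Finset.mem_sdiff.mp hr).2) hcov
      rw [hHk] at hcount
      have : U / 2 ≤ Ev.card + k := by omega
      calc U / 2 ≤ Ev.card + k := this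
        _ ≤ 2 * k * f U + k := Nat.add_le_add_right hcount k
        _ = k + 2 * (k * f U) := by ring
    · right
      push_neg at hex
      have hfree_small : ∀ S : Finset ℕ, S ⊆ C →
          (¬ ∃ a ∈ S, ∃ b ∈ S, a < b ∧ b - a ∈ D) → S.card ≤ k - 1 := by
        intro S hS hSfree
        by_contra hcon
        obtain ⟨H, hHS, hHk⟩ := Finset.exists_subset_card_eq (s := S) (n := k) (by omega)
        obtain ⟨a, ha, b, hb, hab, hD⟩ := hex H (hHS.trans hS) hHk
        exact hSfree ⟨a, hHS ha, b, hHS hb, hab, hD⟩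
      obtain ⟨S, hSmem, hSmax⟩ := Finset.exists_max_image
        (C.powerset.filter (fun S => ¬ ∃ a ∈ S, ∃ b ∈ S, a < b ∧ b - a ∈ D))
        Finset.card ⟨∅, by simp⟩
      rw [Finset.mem_filter, Finset.mem_powerset] at hSmem
      obtain ⟨hSC, hSfree⟩ := hSmem
      have hScard : S.card ≤ k - 1 := hfree_small S hSC hSfree
      have hcov2 : ∀ c ∈ C \ S, ∃ s ∈ S, ((c : ℤ) - (s : ℤ)).natAbs ∈ D := by
        intro c hc
        rw [Finset.mem_sdiff] at hc
        by_contra hno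
        push_neg at hno
        have hfree' : ¬ ∃ a ∈ insert c S, ∃ b ∈ insert c S, a < b ∧ b - a ∈ D := by
          rintro ⟨a, ha, b, hb, hlt, hD⟩
          simp only [Finset.mem_insert] at ha hb
          rcases ha with rfl | ha <;> rcases hb with rfl | hb
          · omega
          · have he : ((a : ℤ) - (b : ℤ)).natAbs = b - a := by omega
            exact hno b hb (he ▸ hD)
          · have he : ((b : ℤ) - (a : ℤ)).natAbs = b - a := by omega
            exact hno a ha (he ▸ hD)
          · exact hSfree ⟨a, ha, b, hb, hlt, hD⟩
        have hin : insert c S ∈ C.powerset.filter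
            (fun S => ¬ ∃ a ∈ S, ∃ b ∈ S, a < b ∧ b - a ∈ D) := by
          rw [Finset.mem_filter, Finset.mem_powerset]
          exact ⟨Finset.insert_subset hc.1 hSC, hfree'⟩
        have := hSmax _ hin
        rw [Finset.card_insert_of_notMem hc.2] at this
        omega
      have hcount := count_aux D U (C \ S) S
        ((Finset.sdiff_subset).trans (Finset.filter_subset _ _))
        (hSC.trans (Finset.filter_subset _ _))
        (fun r hr => (Finset.mem_sdiff.mp hr).2) hcov2
      have hCS : C.card ≤ S.card + (C \ S).card := by
        have := Finset.card_le_card_sdiff_add_card (s := C) (t := S)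
        omega
      have hcc := coprime_count P hP2 (U / P)
      rw [Nat.mul_div_cancel' hPU] at hcc
      have h2S : 2 * S.card * f U ≤ 2 * ((k - 1) * f U) := by
        rw [← mul_assoc]
        exact Nat.mul_le_mul_right _ (by omega)
      calc P.totient * (U / P) ≤ C.card := hcc
        _ ≤ S.card + (C \ S).card := hCS
        _ ≤ (k - 1) + 2 * ((k - 1) * f U) :=
            Nat.add_le_add hScard (hcount.trans h2S)
  -- real constants
  set K : ℝ := (k : ℝ) with hKdef
  set Pr : ℝ := (P : ℝ) with hPrdef
  set F : ℝ := ((P.totient : ℕ) : ℝ) with hFdef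
  have hK2 : (2 : ℝ) ≤ K := by rw [hKdef]; exact_mod_cast hk
  have hPr2 : (2 : ℝ) ≤ Pr := by rw [hPrdef]; exact_mod_cast hP2
  have hF1 : (1 : ℝ) ≤ F := by rw [hFdef]; exact_mod_cast hφ
  have hK0 : (0 : ℝ) < K := by linarith
  have hPr0 : (0 : ℝ) < Pr := by linarith
  have hF0 : (0 : ℝ) < F := by linarith
  set c : ℝ := (4 * K + K * (K - 1) * Pr / F)⁻¹ with hcdef
  have hden : (0 : ℝ) < 4 * K + K * (K - 1) * Pr / F := by
    have h1 : (0 : ℝ) ≤ K * (K - 1) * Pr / F := by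
      apply div_nonneg _ hF0.le
      exact mul_nonneg (mul_nonneg hK0.le (by linarith)) hPr0.le
    linarith
  have hc0 : 0 < c := inv_pos.mpr hden
  have hinv : (4 * K + K * (K - 1) * Pr / F) * c = 1 := mul_inv_cancel₀ hden.ne'
  have hinv' : 4 * K * c * F + K * (K - 1) * Pr * c = F := by
    field_simp at hinv
    nlinarith [hinv]
  have hpos1 : 0 < K * (K - 1) * Pr * c :=
    mul_pos (mul_pos (mul_pos hK0 (by linarith)) hPr0) hc0
  have hδ1 : 0 < 1 - 4 * K * c := by nlinarith [hinv', hpos1, hF0]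
  have hpos2 : 0 ≤ (K - 2) * (K - 1) * Pr * c :=
    mul_nonneg (mul_nonneg (mul_nonneg (by linarith) (by linarith)) hPr0.le) hc0.le
  have hpos3 : 0 < K * c * F := mul_pos (mul_pos hK0 hc0) hF0
  have hδ2 : 0 < F - 2 * (K - 1) * c * Pr := by nlinarith [hinv', hpos2, hpos3]
  have htend : Filter.Tendsto (fun n : ℕ => (n : ℝ)) Filter.atTop Filter.atTop :=
    tendsto_natCast_atTop_atTop
  have hev1 : ∀ᶠ n : ℕ in Filter.atTop, Pr + 2 * K ≤ (1 - 4 * K * c) * n :=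
    (Filter.Tendsto.const_mul_atTop hδ1 htend).eventually_ge_atTop _
  have hev2 : ∀ᶠ n : ℕ in Filter.atTop, (F + K) * Pr ≤ (F - 2 * (K - 1) * c * Pr) * n :=
    (Filter.Tendsto.const_mul_atTop hδ2 htend).eventually_ge_atTop _
  have hmain : ∀ᶠ n : ℕ in Filter.atTop, c ≤ (f n : ℝ) / n := by
    filter_upwards [hev1, hev2, Filter.eventually_ge_atTop P, Filter.eventually_ge_atTop 1]
      with n h1 h2 hnP hn1
    set U := P * (n / P) with hU
    have hU0 : 0 < U := Nat.mul_pos (by omega) (Nat.div_pos hnP (by omega))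
    have hUn : U ≤ n := Nat.mul_div_le n P
    have hnU : n < U + P := by
      have hd := Nat.div_add_mod n P
      have hm := Nat.mod_lt n (show 0 < P by omega)
      omega
    have hPU : P ∣ U := Dvd.intro _ rfl
    have hdiv : U / P = n / P := by rw [hU, Nat.mul_div_cancel_left _ (show 0 < P by omega)]
    have hn0 : (0 : ℝ) < (n : ℝ) := by exact_mod_cast Nat.lt_of_lt_of_le Nat.zero_lt_one hn1
    rw [le_div_iff₀ hn0]
    rcases key U hU0 hPU with hA | hB
    · -- case 1
      have hfUf : k * f U ≤ k * f n := Nat.mul_le_mul le_rfl (hmono hUn)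
      set x := k * f U with hx
      set y := k * f n with hy
      have hnat : n ≤ P + 2 * k + 4 * y := by omega
      rw [hy] at hnat
      have hreal : (n : ℝ) ≤ Pr + 2 * K + 4 * (K * (f n : ℝ)) := by
        rw [hPrdef, hKdef]; exact_mod_cast hnat
      have h4K : (0 : ℝ) < 4 * K := by linarith
      have hstep : 4 * K * (c * n) ≤ 4 * K * ((f n : ℝ)) := by nlinarith [h1, hreal]
      exact le_of_mul_le_mul_left hstep h4K
    · -- case 2
      have hfUf : (k - 1) * f U ≤ (k - 1) * f n := Nat.mul_le_mul le_rfl (hmono hUn)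
      rw [hdiv] at hB
      have hnat : P.totient * (n / P) ≤ (k - 1) + 2 * ((k - 1) * f n) :=
        hB.trans (Nat.add_le_add_left (Nat.mul_le_mul le_rfl hfUf) _)
      have hmcast : (n : ℝ) - Pr ≤ Pr * ((n / P : ℕ) : ℝ) := by
        have h3 : n ≤ P * (n / P) + P := le_of_lt hnU
        have h4 := (Nat.cast_le (α := ℝ)).mpr h3
        push_cast at h4
        rw [hPrdef]
        linarith
      have hreal : F * ((n / P : ℕ) : ℝ) ≤ (K - 1) + 2 * ((K - 1) * (f n : ℝ)) := by
        have h5 := (Nat.cast_le (α := ℝ)).mpr hnat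
        push_cast [Nat.cast_sub (show 1 ≤ k by omega)] at h5
        rw [hFdef, hKdef]
        push_cast at h5 ⊢; linarith
      have h2k1Pr : (0 : ℝ) < 2 * (K - 1) * Pr := by nlinarith
      have hstep : 2 * (K - 1) * Pr * (c * n) ≤ 2 * (K - 1) * Pr * ((f n : ℝ)) := by
        nlinarith [mul_le_mul_of_nonneg_left hmcast hF0.le,
          mul_le_mul_of_nonneg_left hreal hPr0.le, h2]
      exact le_of_mul_le_mul_left hstep h2k1Pr
  rw [ge_iff_le]
  refine Filter.le_liminf_of_le ?_ hmain
  apply Filter.IsBoundedUnder.isCoboundedUnder_ge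
  refine Filter.isBoundedUnder_of ⟨1, fun n => ?_⟩
  rcases Nat.eq_zero_or_pos n with rfl | hn
  · simp
  · rw [div_le_one (by exact_mod_cast hn)]
    have hfn : f n ≤ n := by
      have h6 := Finset.card_filter_le (Finset.Icc 1 n) (fun d => d ∈ D)
      simpa [Nat.card_Icc] using h6
    exact_mod_cast hfn
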